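/- Let V be a braided monoidal category with unit object I and let (A,v,η,ε) be an augmented lax tricocycloid in V. Then the following data define a left skew-monoidal structure on V with unit object I: tensor product X∗Y = A⊗X⊗Y; associativity constraint α_{X,Y,Z} = (1_A⊗c_{A,X}⊗1_Y⊗1_Z)∘(v⊗1_X⊗1_Y⊗1_Z) : A⊗(A⊗X⊗Y)⊗Z → A⊗X⊗(A⊗Y⊗Z); left unit constraint λ_X = ε⊗1_X : A⊗X → X; right unit constraint ρ_X = η⊗1_X : X → A⊗X. That is, all five left skew-monoidal axioms hold for (∗, I, α, λ, ρ). -/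

import Mathlib

open CategoryTheory MonoidalCategory

set_option maxHeartbeats 1000000

variable {V : Type*} [Category V] [MonoidalCategory V] [BraidedCategory V]

/-- The associativity constraint `α_{X,Y,Z} : (X∗Y)∗Z ⟶ X∗(Y∗Z)` of the warped tensor
`X ∗ Y = A ⊗ (X ⊗ Y)`, given by `(1_A ⊗ c_{A,X} ⊗ 1_Y ⊗ 1_Z) ∘ (v ⊗ 1_X ⊗ 1_Y ⊗ 1_Z)`,
written with explicit coherence isomorphisms. -/
def skewAssoc (A : V) (v : A ⊗ A ⟶ A ⊗ A) (X Y Z : V) :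
    A ⊗ ((A ⊗ (X ⊗ Y)) ⊗ Z) ⟶ A ⊗ (X ⊗ (A ⊗ (Y ⊗ Z))) :=
  (A ◁ (α_ A (X ⊗ Y) Z).hom) ≫ (α_ A A ((X ⊗ Y) ⊗ Z)).inv ≫ (v ▷ ((X ⊗ Y) ⊗ Z)) ≫
    (α_ A A ((X ⊗ Y) ⊗ Z)).hom ≫
    (A ◁ ((α_ A (X ⊗ Y) Z).inv ≫
      (((α_ A X Y).inv ≫ ((β_ A X).hom ▷ Y) ≫ (α_ X A Y).hom) ▷ Z) ≫
      (α_ X (A ⊗ Y) Z).hom ≫ (X ◁ (α_ A Y Z).hom)))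

/-- The left unit constraint `λ_X = ε ⊗ 1_X : I ∗ X = A ⊗ (I ⊗ X) ⟶ X`. -/
def skewLambda (A : V) (ε : A ⟶ 𝟙_ V) (X : V) : A ⊗ (𝟙_ V ⊗ X) ⟶ X :=
  (A ◁ (λ_ X).hom) ≫ (ε ▷ X) ≫ (λ_ X).hom

/-- The right unit constraint `ρ_X = η ⊗ 1_X : X ⟶ X ∗ I = A ⊗ (X ⊗ I)`. -/
def skewRho (A : V) (η : 𝟙_ V ⟶ A) (X : V) : X ⟶ A ⊗ (X ⊗ 𝟙_ V) :=
  (λ_ X).inv ≫ (η ▷ X) ≫ (A ◁ (ρ_ X).inv)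

open BraidedCategory

/-- Normal form for `skewAssoc` in terms of `⊗≫`. -/
lemma skewAssoc_eq (A : V) (v : A ⊗ A ⟶ A ⊗ A) (X Y Z : V) :
    skewAssoc A v X Y Z =
      𝟙 _ ⊗≫ (v ▷ (X ⊗ (Y ⊗ Z))) ⊗≫ (A ◁ ((β_ A X).hom ▷ (Y ⊗ Z))) ⊗≫ 𝟙 _ := by
  simp only [skewAssoc]; monoidal

lemma braid_unit_right (A : V) : (β_ A (𝟙_ V)).hom = (ρ_ A).hom ≫ (λ_ A).inv := by
  rw [← braiding_leftUnitor A]; simp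

lemma braid_unit_left (X : V) : (β_ (𝟙_ V) X).hom = (λ_ X).hom ≫ (ρ_ X).inv := by
  rw [← braiding_rightUnitor X]; simp

lemma pentagon_rhs_eq (A : V) (v : A ⊗ A ⟶ A ⊗ A) (X Y Z W : V) :
    skewAssoc A v (A ⊗ (X ⊗ Y)) Z W ≫ skewAssoc A v X Y (A ⊗ (Z ⊗ W)) =
    𝟙 _ ⊗≫ (((v ▷ A) ≫ (α_ A A A).hom ≫ (A ◁ (β_ A A).hom) ≫ (α_ A A A).inv ≫
        (v ▷ A)) ▷ ((X ⊗ Y) ⊗ (Z ⊗ W))) ⊗≫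
      ((A ⊗ A) ◁ ((β_ A (X ⊗ Y)).hom ▷ (Z ⊗ W))) ⊗≫
      (A ◁ ((β_ A X).hom ▷ (Y ⊗ (A ⊗ (Z ⊗ W))))) ⊗≫ 𝟙 _ := by
  calc skewAssoc A v (A ⊗ (X ⊗ Y)) Z W ≫ skewAssoc A v X Y (A ⊗ (Z ⊗ W))
      = 𝟙 _ ⊗≫ (v ▷ ((A ⊗ (X ⊗ Y)) ⊗ (Z ⊗ W))) ⊗≫
          (A ◁ (((α_ A A (X ⊗ Y)).inv ≫ ((β_ A A).hom ▷ (X ⊗ Y)) ≫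
            (α_ A A (X ⊗ Y)).hom ≫ (A ◁ (β_ A (X ⊗ Y)).hom) ≫
            (α_ A (X ⊗ Y) A).inv) ▷ (Z ⊗ W))) ⊗≫
          (v ▷ (X ⊗ (Y ⊗ (A ⊗ (Z ⊗ W))))) ⊗≫
          (A ◁ ((β_ A X).hom ▷ (Y ⊗ (A ⊗ (Z ⊗ W))))) ⊗≫ 𝟙 _ := by
        rw [skewAssoc_eq, skewAssoc_eq, braiding_tensor_right_hom A A (X ⊗ Y)]; monoidal
    _ = 𝟙 _ ⊗≫ (v ▷ ((A ⊗ (X ⊗ Y)) ⊗ (Z ⊗ W))) ⊗≫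
          (A ◁ ((β_ A A).hom ▷ ((X ⊗ Y) ⊗ (Z ⊗ W)))) ⊗≫
          (((A ⊗ A) ◁ ((β_ A (X ⊗ Y)).hom ▷ (Z ⊗ W))) ≫
            (v ▷ (((X ⊗ Y) ⊗ A) ⊗ (Z ⊗ W)))) ⊗≫
          (A ◁ ((β_ A X).hom ▷ (Y ⊗ (A ⊗ (Z ⊗ W))))) ⊗≫ 𝟙 _ := by monoidal
    _ = 𝟙 _ ⊗≫ (v ▷ ((A ⊗ (X ⊗ Y)) ⊗ (Z ⊗ W))) ⊗≫
          (A ◁ ((β_ A A).hom ▷ ((X ⊗ Y) ⊗ (Z ⊗ W)))) ⊗≫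
          ((v ▷ ((A ⊗ (X ⊗ Y)) ⊗ (Z ⊗ W))) ≫
            ((A ⊗ A) ◁ ((β_ A (X ⊗ Y)).hom ▷ (Z ⊗ W)))) ⊗≫
          (A ◁ ((β_ A X).hom ▷ (Y ⊗ (A ⊗ (Z ⊗ W))))) ⊗≫ 𝟙 _ := by
        rw [whisker_exchange]
    _ = _ := by monoidal

lemma pentagon_lhs_eq (A : V) (v : A ⊗ A ⟶ A ⊗ A) (X Y Z W : V) :
    (A ◁ (skewAssoc A v X Y Z ▷ W)) ≫ skewAssoc A v X (A ⊗ (Y ⊗ Z)) W ≫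
        (A ◁ (X ◁ skewAssoc A v Y Z W)) =
    𝟙 _ ⊗≫ (((α_ A A A).hom ≫ (A ◁ v) ≫ (α_ A A A).inv ≫ (v ▷ A) ≫
        (α_ A A A).hom ≫ (A ◁ v) ≫ (α_ A A A).inv) ▷ ((X ⊗ Y) ⊗ (Z ⊗ W))) ⊗≫
      ((A ⊗ A) ◁ ((β_ A (X ⊗ Y)).hom ▷ (Z ⊗ W))) ⊗≫
      (A ◁ ((β_ A X).hom ▷ (Y ⊗ (A ⊗ (Z ⊗ W))))) ⊗≫ 𝟙 _ := by
  calc (A ◁ (skewAssoc A v X Y Z ▷ W)) ≫ skewAssoc A v X (A ⊗ (Y ⊗ Z)) W ≫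
        (A ◁ (X ◁ skewAssoc A v Y Z W))
      = 𝟙 _ ⊗≫ (A ◁ (v ▷ (X ⊗ (Y ⊗ (Z ⊗ W))))) ⊗≫
          (((A ⊗ A) ◁ ((β_ A X).hom ▷ (Y ⊗ (Z ⊗ W)))) ≫
            (v ▷ ((X ⊗ A) ⊗ (Y ⊗ (Z ⊗ W))))) ⊗≫
          (A ◁ ((β_ A X).hom ▷ ((A ⊗ (Y ⊗ Z)) ⊗ W))) ⊗≫
          (A ◁ (X ◁ (v ▷ (Y ⊗ (Z ⊗ W))))) ⊗≫
          (A ◁ (X ◁ (A ◁ ((β_ A Y).hom ▷ (Z ⊗ W))))) ⊗≫ 𝟙 _ := by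
        rw [skewAssoc_eq, skewAssoc_eq, skewAssoc_eq]; monoidal
    _ = 𝟙 _ ⊗≫ (A ◁ (v ▷ (X ⊗ (Y ⊗ (Z ⊗ W))))) ⊗≫
          ((v ▷ ((A ⊗ X) ⊗ (Y ⊗ (Z ⊗ W)))) ≫
            ((A ⊗ A) ◁ ((β_ A X).hom ▷ (Y ⊗ (Z ⊗ W))))) ⊗≫
          (A ◁ ((β_ A X).hom ▷ ((A ⊗ (Y ⊗ Z)) ⊗ W))) ⊗≫
          (A ◁ (X ◁ (v ▷ (Y ⊗ (Z ⊗ W))))) ⊗≫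
          (A ◁ (X ◁ (A ◁ ((β_ A Y).hom ▷ (Z ⊗ W))))) ⊗≫ 𝟙 _ := by
        rw [whisker_exchange]
    _ = 𝟙 _ ⊗≫ (A ◁ (v ▷ (X ⊗ (Y ⊗ (Z ⊗ W))))) ⊗≫
          (v ▷ ((A ⊗ X) ⊗ (Y ⊗ (Z ⊗ W)))) ⊗≫
          (A ◁ (((α_ A A X).hom ≫ (A ◁ (β_ A X).hom) ≫ (α_ A X A).inv ≫
            ((β_ A X).hom ▷ A) ≫ (α_ X A A).hom) ▷ ((Y ⊗ Z) ⊗ W))) ⊗≫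
          (A ◁ (X ◁ (v ▷ (Y ⊗ (Z ⊗ W))))) ⊗≫
          (A ◁ (X ◁ (A ◁ ((β_ A Y).hom ▷ (Z ⊗ W))))) ⊗≫ 𝟙 _ := by monoidal
    _ = 𝟙 _ ⊗≫ (A ◁ (v ▷ (X ⊗ (Y ⊗ (Z ⊗ W))))) ⊗≫
          (v ▷ ((A ⊗ X) ⊗ (Y ⊗ (Z ⊗ W)))) ⊗≫
          (A ◁ (((β_ (A ⊗ A) X).hom ≫ (X ◁ v)) ▷ ((Y ⊗ Z) ⊗ W))) ⊗≫
          (A ◁ (X ◁ (A ◁ ((β_ A Y).hom ▷ (Z ⊗ W))))) ⊗≫ 𝟙 _ := by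
        rw [braiding_tensor_left_hom]; monoidal
    _ = 𝟙 _ ⊗≫ (A ◁ (v ▷ (X ⊗ (Y ⊗ (Z ⊗ W))))) ⊗≫
          (v ▷ ((A ⊗ X) ⊗ (Y ⊗ (Z ⊗ W)))) ⊗≫
          (A ◁ (((v ▷ X) ≫ (β_ (A ⊗ A) X).hom) ▷ ((Y ⊗ Z) ⊗ W))) ⊗≫
          (A ◁ (X ◁ (A ◁ ((β_ A Y).hom ▷ (Z ⊗ W))))) ⊗≫ 𝟙 _ := by
        rw [braiding_naturality_left]
    _ = 𝟙 _ ⊗≫ (((α_ A A A).hom ≫ (A ◁ v) ≫ (α_ A A A).inv ≫ (v ▷ A) ≫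
          (α_ A A A).hom ≫ (A ◁ v) ≫ (α_ A A A).inv) ▷ ((X ⊗ Y) ⊗ (Z ⊗ W))) ⊗≫
          (A ◁ ((β_ (A ⊗ A) X).hom ▷ ((Y ⊗ Z) ⊗ W))) ⊗≫
          (A ◁ (X ◁ (A ◁ ((β_ A Y).hom ▷ (Z ⊗ W))))) ⊗≫ 𝟙 _ := by monoidal
    _ = 𝟙 _ ⊗≫ (((α_ A A A).hom ≫ (A ◁ v) ≫ (α_ A A A).inv ≫ (v ▷ A) ≫
          (α_ A A A).hom ≫ (A ◁ v) ≫ (α_ A A A).inv) ▷ ((X ⊗ Y) ⊗ (Z ⊗ W))) ⊗≫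
          ((A ⊗ A) ◁ ((β_ A X).hom ▷ (Y ⊗ (Z ⊗ W)))) ⊗≫
          (A ◁ (((β_ A X).hom ▷ ((A ⊗ Y) ⊗ (Z ⊗ W))) ≫
            ((X ⊗ A) ◁ ((β_ A Y).hom ▷ (Z ⊗ W))))) ⊗≫ 𝟙 _ := by
        rw [braiding_tensor_left_hom]; monoidal
    _ = 𝟙 _ ⊗≫ (((α_ A A A).hom ≫ (A ◁ v) ≫ (α_ A A A).inv ≫ (v ▷ A) ≫
          (α_ A A A).hom ≫ (A ◁ v) ≫ (α_ A A A).inv) ▷ ((X ⊗ Y) ⊗ (Z ⊗ W))) ⊗≫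
          ((A ⊗ A) ◁ ((β_ A X).hom ▷ (Y ⊗ (Z ⊗ W)))) ⊗≫
          (A ◁ (((A ⊗ X) ◁ ((β_ A Y).hom ▷ (Z ⊗ W))) ≫
            ((β_ A X).hom ▷ ((Y ⊗ A) ⊗ (Z ⊗ W))))) ⊗≫ 𝟙 _ := by
        rw [← whisker_exchange]
    _ = 𝟙 _ ⊗≫ (((α_ A A A).hom ≫ (A ◁ v) ≫ (α_ A A A).inv ≫ (v ▷ A) ≫
          (α_ A A A).hom ≫ (A ◁ v) ≫ (α_ A A A).inv) ▷ ((X ⊗ Y) ⊗ (Z ⊗ W))) ⊗≫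
          ((A ⊗ A) ◁ (((α_ A X Y).inv ≫ ((β_ A X).hom ▷ Y) ≫ (α_ X A Y).hom ≫
            (X ◁ (β_ A Y).hom) ≫ (α_ X Y A).inv) ▷ (Z ⊗ W))) ⊗≫
          (A ◁ ((β_ A X).hom ▷ (Y ⊗ (A ⊗ (Z ⊗ W))))) ⊗≫ 𝟙 _ := by monoidal
    _ = _ := by rw [← braiding_tensor_right_hom]

/-- An augmented lax tricocycloid `(A, v, η, ε)` in a braided monoidal
category `V` yields a left skew-monoidal structure on `V` with tensor `X ∗ Y = A ⊗ (X ⊗ Y)`,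
unit `I`, associativity `α = (1⊗c_{A,X}⊗1⊗1)(v⊗1⊗1⊗1)`, left unit `ε ⊗ 1` and right unit
`η ⊗ 1`: the five skew-monoidal axioms hold. -/
theorem augmented_tricocycloid_skew_monoidal (A : V) (v : A ⊗ A ⟶ A ⊗ A)
    (η : 𝟙_ V ⟶ A) (ε : A ⟶ 𝟙_ V)
    (hv : (v ▷ A) ≫ (α_ A A A).hom ≫ (A ◁ (β_ A A).hom) ≫ (α_ A A A).inv ≫ (v ▷ A) =
      (α_ A A A).hom ≫ (A ◁ v) ≫ (α_ A A A).inv ≫ (v ▷ A) ≫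
        (α_ A A A).hom ≫ (A ◁ v) ≫ (α_ A A A).inv)
    (haug1 : (ρ_ A).inv ≫ (A ◁ η) ≫ v ≫ (A ◁ ε) ≫ (ρ_ A).hom = 𝟙 A)
    (haug2 : v ≫ (ε ▷ A) ≫ (λ_ A).hom = (A ◁ ε) ≫ (ρ_ A).hom)
    (haug3 : (λ_ A).inv ≫ (η ▷ A) ≫ v = (ρ_ A).inv ≫ (A ◁ η))
    (haug4 : η ≫ ε = 𝟙 (𝟙_ V)) :
    -- (1) pentagon
    (∀ X Y Z W : V,
      (A ◁ (skewAssoc A v X Y Z ▷ W)) ≫ skewAssoc A v X (A ⊗ (Y ⊗ Z)) W ≫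
          (A ◁ (X ◁ skewAssoc A v Y Z W)) =
        skewAssoc A v (A ⊗ (X ⊗ Y)) Z W ≫ skewAssoc A v X Y (A ⊗ (Z ⊗ W))) ∧
    -- (2) (1_X ∗ λ_Y) ∘ α_{X,I,Y} ∘ (ρ_X ∗ 1_Y) = 1
    (∀ X Y : V,
      (A ◁ (skewRho A η X ▷ Y)) ≫ skewAssoc A v X (𝟙_ V) Y ≫
          (A ◁ (X ◁ skewLambda A ε Y)) = 𝟙 (A ⊗ (X ⊗ Y))) ∧
    -- (3) λ_{X∗Y} ∘ α_{I,X,Y} = λ_X ∗ 1_Y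
    (∀ X Y : V,
      skewAssoc A v (𝟙_ V) X Y ≫ skewLambda A ε (A ⊗ (X ⊗ Y)) =
        A ◁ (skewLambda A ε X ▷ Y)) ∧
    -- (4) α_{X,Y,I} ∘ ρ_{X∗Y} = 1_X ∗ ρ_Y
    (∀ X Y : V,
      skewRho A η (A ⊗ (X ⊗ Y)) ≫ skewAssoc A v X Y (𝟙_ V) =
        A ◁ (X ◁ skewRho A η Y)) ∧
    -- (5) λ_I ∘ ρ_I = 1_I
    (skewRho A η (𝟙_ V) ≫ skewLambda A ε (𝟙_ V) = 𝟙 (𝟙_ V)) := by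
  refine ⟨fun X Y Z W => ?_, fun X Y => ?_, fun X Y => ?_, fun X Y => ?_, ?_⟩
  · -- (1) pentagon
    rw [pentagon_lhs_eq, pentagon_rhs_eq, hv]
  · -- (2)
    calc (A ◁ (skewRho A η X ▷ Y)) ≫ skewAssoc A v X (𝟙_ V) Y ≫
            (A ◁ (X ◁ skewLambda A ε Y))
        = 𝟙 _ ⊗≫ ((A ◁ η) ▷ (X ⊗ Y)) ⊗≫ (v ▷ (X ⊗ Y)) ⊗≫
            (A ◁ (((β_ A X).hom ≫ (X ◁ ε)) ▷ Y)) ⊗≫ 𝟙 _ := by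
          rw [skewRho, skewAssoc_eq, skewLambda]; monoidal
      _ = 𝟙 _ ⊗≫ ((A ◁ η) ▷ (X ⊗ Y)) ⊗≫ (v ▷ (X ⊗ Y)) ⊗≫
            (A ◁ (((ε ▷ X) ≫ (β_ (𝟙_ V) X).hom) ▷ Y)) ⊗≫ 𝟙 _ := by
          rw [braiding_naturality_left]
      _ = 𝟙 _ ⊗≫ (((ρ_ A).inv ≫ (A ◁ η) ≫ v ≫ (A ◁ ε) ≫ (ρ_ A).hom) ▷ (X ⊗ Y)) ⊗≫
            𝟙 _ := by rw [braid_unit_left]; monoidal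
      _ = 𝟙 (A ⊗ (X ⊗ Y)) := by rw [haug1]; monoidal
  · -- (3)
    calc skewAssoc A v (𝟙_ V) X Y ≫ skewLambda A ε (A ⊗ (X ⊗ Y))
        = 𝟙 _ ⊗≫ ((v ≫ (ε ▷ A) ≫ (λ_ A).hom) ▷ (X ⊗ Y)) ⊗≫ 𝟙 _ := by
          rw [skewAssoc_eq, skewLambda, braid_unit_right]; monoidal
      _ = 𝟙 _ ⊗≫ (((A ◁ ε) ≫ (ρ_ A).hom) ▷ (X ⊗ Y)) ⊗≫ 𝟙 _ := by rw [haug2]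
      _ = A ◁ (skewLambda A ε X ▷ Y) := by rw [skewLambda]; monoidal
  · -- (4)
    calc skewRho A η (A ⊗ (X ⊗ Y)) ≫ skewAssoc A v X Y (𝟙_ V)
        = 𝟙 _ ⊗≫ (((λ_ A).inv ≫ (η ▷ A) ≫ v) ▷ (X ⊗ Y)) ⊗≫
            (A ◁ ((β_ A X).hom ▷ Y)) ⊗≫ 𝟙 _ := by
          rw [skewRho, skewAssoc_eq]; monoidal
      _ = 𝟙 _ ⊗≫ (((ρ_ A).inv ≫ (A ◁ η)) ▷ (X ⊗ Y)) ⊗≫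
            (A ◁ ((β_ A X).hom ▷ Y)) ⊗≫ 𝟙 _ := by rw [haug3]
      _ = 𝟙 _ ⊗≫ (A ◁ ((η ▷ X ≫ (β_ A X).hom) ▷ Y)) ⊗≫ 𝟙 _ := by monoidal
      _ = 𝟙 _ ⊗≫ (A ◁ (((β_ (𝟙_ V) X).hom ≫ X ◁ η) ▷ Y)) ⊗≫ 𝟙 _ := by
          rw [braiding_naturality_left]
      _ = A ◁ (X ◁ skewRho A η Y) := by rw [braid_unit_left, skewRho]; monoidal
  · -- (5)
    simp only [skewRho, skewLambda, Category.assoc]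
    slice_lhs 3 4 => rw [← MonoidalCategory.whiskerLeft_comp, unitors_equal,
      Iso.inv_hom_id, MonoidalCategory.whiskerLeft_id]
    rw [Category.id_comp]
    slice_lhs 2 3 => rw [← comp_whiskerRight, haug4]
    simp
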